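/- Let x₁,…,xₙ ∈ [-1,1] \ {0} with |x₁| ≤ |x₂| ≤ ⋯ ≤ |xₙ|, and let f(x) = ∏_{i=1}^n (x - x_i). Then for every s ≤ n, sup_{0 ≤ j ≤ s} |f^{(j)}(0)| ≤ (n!/(n-s)!) ∏_{i=s+1}^n |x_i|. -/

import Mathlib

open Polynomial Finset

lemma aux_lb {m n : ℕ} (e : Fin m → Fin n) (he : StrictMono e) (k : Fin m) :
    (k : ℕ) ≤ (e k : ℕ) := by
  obtain ⟨kv, hkv⟩ := k
  induction kv with
  | zero => simp
  | succ i ih =>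
    have hi : i < m := Nat.lt_of_succ_lt hkv
    have h1 := ih hi
    have h2 : e ⟨i, hi⟩ < e ⟨i + 1, hkv⟩ := he (by simp [Fin.mk_lt_mk])
    have h3 := Fin.lt_iff_val_lt_val.mp h2
    simp only [Fin.val_mk] at h1 ⊢
    omega

lemma aux_ub {m n : ℕ} (e : Fin m → Fin n) (he : StrictMono e) (k : Fin m) :
    (e k : ℕ) ≤ n - m + k := by
  set E : Fin m → Fin n := fun i => (e i.rev).rev with hE
  have hEmono : StrictMono E := fun a b hab =>
    Fin.rev_lt_rev.mpr (he (Fin.rev_lt_rev.mpr hab))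
  have hL := aux_lb E hEmono k.rev
  have h5 : (k.rev).rev = k := Fin.rev_rev k
  have hEv : (E k.rev : ℕ) = n - 1 - (e k : ℕ) := by
    rw [hE]; simp only [h5, Fin.val_rev]; omega
  rw [hEv, Fin.val_rev] at hL
  have h3 := (e k).isLt
  have h4 := k.isLt
  omega

lemma prod_abs_le {n j : ℕ} (hj : j ≤ n) (x : Fin n → ℝ)
    (hx1 : ∀ i, |x i| ≤ 1)
    (hmono : ∀ i j : Fin n, i ≤ j → |x i| ≤ |x j|)
    (t : Finset (Fin n)) (ht : t.card = n - j) :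
    ∏ i ∈ t, |x i| ≤ ∏ i ∈ univ.filter (fun i : Fin n => j ≤ (i : ℕ)), |x i| := by
  set m := n - j with hm
  set G : Fin m → Fin n := fun k => ⟨j + k, by omega⟩ with hG
  have hGmono : StrictMono G := by
    intro a b hab
    simp only [hG, Fin.mk_lt_mk]
    exact Nat.add_lt_add_left (Fin.lt_iff_val_lt_val.mp hab) j
  set T := univ.filter (fun i : Fin n => j ≤ (i : ℕ)) with hT
  have hTG : T = Finset.image G univ := by
    ext i
    simp only [hT, mem_filter, mem_univ, true_and, Finset.mem_image]
    constructor
    · intro hi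
      have hiv := i.isLt
      exact ⟨⟨(i : ℕ) - j, by omega⟩, Fin.ext (by simp [hG]; omega)⟩
    · rintro ⟨k, -, rfl⟩
      simp [hG]
  have hTcard : T.card = m := by
    rw [hTG, Finset.card_image_of_injective _ hGmono.injective, card_univ, Fintype.card_fin]
  set e := t.orderEmbOfFin ht with he
  have he1 : ∏ i ∈ t, |x i| = ∏ k : Fin m, |x (e k)| := by
    refine (Finset.prod_bij (fun k _ => e k) ?_ ?_ ?_ ?_).symm
    · intro k _; exact t.orderEmbOfFin_mem ht k
    · intro a _ b _ hab; exact e.injective hab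
    · intro b hb
      have : b ∈ Set.range e := by rw [he, Finset.range_orderEmbOfFin]; exact hb
      obtain ⟨k, hk⟩ := this; exact ⟨k, mem_univ _, hk⟩
    · intro k _; rfl
  have he2 : ∏ i ∈ T, |x i| = ∏ k : Fin m, |x (G k)| := by
    rw [hTG, Finset.prod_image (fun a _ b _ h => hGmono.injective h)]
  rw [he1, he2]
  apply Finset.prod_le_prod (fun k _ => abs_nonneg _)
  intro k _
  apply hmono
  have h1 := aux_ub e e.strictMono k
  have : (e k : ℕ) ≤ j + (k : ℕ) := by omega
  exact Fin.le_iff_val_le_val.mpr (by simpa [hG] using this)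

lemma descFactorial_mono {n j s : ℕ} (hjs : j ≤ s) (hs : s ≤ n) :
    n.descFactorial j ≤ n.descFactorial s := by
  induction s with
  | zero =>
    have : j = 0 := Nat.le_zero.mp hjs
    simp [this]
  | succ s ih =>
    rcases Nat.lt_or_ge j (s + 1) with h | h
    · have h1 : n.descFactorial j ≤ n.descFactorial s :=
        ih (Nat.lt_succ_iff.mp h) (by omega)
      rw [Nat.descFactorial_succ]
      have : 1 ≤ n - s := by omega
      calc n.descFactorial j ≤ n.descFactorial s := h1
        _ = 1 * n.descFactorial s := (one_mul _).symm
        _ ≤ (n - s) * n.descFactorial s := Nat.mul_le_mul_right _ this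
    · have : j = s + 1 := by omega
      rw [this]

theorem stmt0 (n : ℕ) (x : Fin n → ℝ)
    (hx0 : ∀ i, x i ≠ 0) (hx1 : ∀ i, |x i| ≤ 1)
    (hmono : ∀ i j : Fin n, i ≤ j → |x i| ≤ |x j|)
    (f : ℝ → ℝ) (hf : f = fun t => ∏ i, (t - x i))
    (s : ℕ) (hs : s ≤ n) :
    ∀ j ≤ s, |iteratedDeriv j f 0| ≤
      (n.descFactorial s : ℝ) *
        ∏ i ∈ Finset.univ.filter (fun i : Fin n => s ≤ (i : ℕ)), |x i| := by
  intro j hjs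
  have hjn : j ≤ n := le_trans hjs hs
  set p : ℝ[X] := ∏ i : Fin n, (X - C (x i)) with hp
  have hfp : f = fun t => p.eval t := by
    rw [hf]; funext t; simp [hp, eval_prod]
  have hiter : ∀ k, iteratedDeriv k f = fun t => (derivative^[k] p).eval t := by
    intro k
    induction k with
    | zero => simpa using hfp
    | succ k ih =>
      rw [iteratedDeriv_succ, ih, Function.iterate_succ_apply']
      funext t
      exact Polynomial.deriv (𝕜 := ℝ) (p := derivative^[k] p) (x := t)
  have hval : iteratedDeriv j f 0 = (j.factorial : ℝ) * p.coeff j := by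
    rw [hiter j]
    simp only
    rw [← Polynomial.coeff_zero_eq_eval_zero, Polynomial.coeff_iterate_derivative]
    simp [Nat.descFactorial_self]
  -- coefficient via Vieta
  have hcard : Multiset.card (Finset.univ.val.map x) = n := by simp
  have hpm : p = (Multiset.map (fun t => X - C t) (Finset.univ.val.map x)).prod := by
    rw [hp, Finset.prod, Multiset.map_map]
    rfl
  have hcoeff : p.coeff j =
      (-1) ^ (n - j) * (Finset.univ.val.map x).esymm (n - j) := by
    rw [hpm, Multiset.prod_X_sub_C_coeff _ (by rw [hcard]; exact hjn), hcard]
  have hesymm : (Finset.univ.val.map x).esymm (n - j) =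
      ∑ t ∈ Finset.powersetCard (n - j) Finset.univ, ∏ i ∈ t, x i :=
    Finset.esymm_map_val x Finset.univ (n - j)
  set M : ℝ := ∏ i ∈ Finset.univ.filter (fun i : Fin n => j ≤ (i : ℕ)), |x i| with hM
  have hMnonneg : 0 ≤ M := Finset.prod_nonneg fun i _ => abs_nonneg _
  have habs : |p.coeff j| ≤ (n.choose (n - j) : ℝ) * M := by
    rw [hcoeff, abs_mul, abs_pow, abs_neg, abs_one, one_pow, one_mul, hesymm]
    calc |∑ t ∈ Finset.powersetCard (n - j) Finset.univ, ∏ i ∈ t, x i|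
        ≤ ∑ t ∈ Finset.powersetCard (n - j) Finset.univ, |∏ i ∈ t, x i| :=
          Finset.abs_sum_le_sum_abs _ _
      _ ≤ ∑ t ∈ Finset.powersetCard (n - j) Finset.univ, M := by
          apply Finset.sum_le_sum
          intro t ht
          rw [Finset.abs_prod]
          obtain ⟨-, htc⟩ := Finset.mem_powersetCard.mp ht
          exact prod_abs_le hjn x hx1 hmono t htc
      _ = (n.choose (n - j) : ℝ) * M := by
          rw [Finset.sum_const, Finset.card_powersetCard, card_univ, Fintype.card_fin,
            nsmul_eq_mul]
  have hstep1 : |iteratedDeriv j f 0| ≤ (n.descFactorial j : ℝ) * M := by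
    rw [hval, abs_mul, abs_of_nonneg (by positivity : (0:ℝ) ≤ (j.factorial : ℝ))]
    calc (j.factorial : ℝ) * |p.coeff j|
        ≤ (j.factorial : ℝ) * ((n.choose (n - j) : ℝ) * M) := by
          apply mul_le_mul_of_nonneg_left habs (by positivity)
      _ = (n.descFactorial j : ℝ) * M := by
          rw [Nat.choose_symm hjn, Nat.descFactorial_eq_factorial_mul_choose]
          push_cast; ring
  refine le_trans hstep1 ?_
  -- compare with s
  set Ms : ℝ := ∏ i ∈ Finset.univ.filter (fun i : Fin n => s ≤ (i : ℕ)), |x i| with hMs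
  have hMsnonneg : 0 ≤ Ms := Finset.prod_nonneg fun i _ => abs_nonneg _
  have hsub : Finset.univ.filter (fun i : Fin n => s ≤ (i : ℕ)) ⊆
      Finset.univ.filter (fun i : Fin n => j ≤ (i : ℕ)) := by
    intro i hi
    simp only [Finset.mem_filter, Finset.mem_univ, true_and] at hi ⊢
    omega
  have hMle : M ≤ Ms := by
    rw [hM, ← Finset.prod_sdiff hsub]
    have h1 : ∏ i ∈ (Finset.univ.filter (fun i : Fin n => j ≤ (i : ℕ))) \
        (Finset.univ.filter (fun i : Fin n => s ≤ (i : ℕ))), |x i| ≤ 1 :=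
      Finset.prod_le_one (fun i _ => abs_nonneg _) (fun i _ => hx1 i)
    calc (∏ i ∈ (Finset.univ.filter (fun i : Fin n => j ≤ (i : ℕ))) \
          (Finset.univ.filter (fun i : Fin n => s ≤ (i : ℕ))), |x i|) * Ms
        ≤ 1 * Ms := mul_le_mul_of_nonneg_right h1 hMsnonneg
      _ = Ms := one_mul Ms
  have hdf : (n.descFactorial j : ℝ) ≤ (n.descFactorial s : ℝ) := by
    exact_mod_cast descFactorial_mono hjs hs
  exact mul_le_mul hdf hMle hMnonneg (by positivity)
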